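/- For every z in the open unit disk D one has Re( z·φ'(z) / (φ(z) − 1) ) = Re( (1 + z/2) / (1 + z/4) ) > 0 whenever z ≠ 0; consequently φ maps D onto a domain starlike with respect to the point φ(0) = 1. -/

import Mathlib

open Complex

private lemma phi_aux_ne (z : ℂ) (hz : ‖z‖ < 1) : (1 : ℂ) + z/4 ≠ 0 := by
  intro h
  have hz4 : z = -4 := by linear_combination 4 * h
  rw [hz4] at hz
  norm_num at hz

private lemma phi_aux_pos (z : ℂ) (hz : ‖z‖ < 1) :
    0 < ((1 + z/2)/(1 + z/4)).re := by
  have hns : Complex.normSq z < 1 := by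
    have := Complex.sq_norm z
    nlinarith [norm_nonneg z]
  have hn : 0 < Complex.normSq (1 + z/4) := by
    rw [Complex.normSq_pos]; exact phi_aux_ne z hz
  rw [Complex.div_re]
  rw [Complex.normSq_apply] at hns hn ⊢
  set x := z.re; set y := z.im
  have h1 : (1 + z/2).re = 1 + x/2 := by simp [x]
  have h2 : (1 + z/2).im = y/2 := by simp [y]
  have h3 : (1 + z/4).re = 1 + x/4 := by simp [x]
  have h4 : (1 + z/4).im = y/4 := by simp [y]
  rw [h1, h2, h3, h4]
  rw [h3, h4] at hn
  have hx : -1 < x := by nlinarith [sq_nonneg y]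
  have hnum : 0 < (1 + x/2) * (1 + x/4) + (y/2)*(y/4) := by nlinarith
  rw [← add_div]
  exact div_pos hnum hn

/-- forward: image points satisfy the inequality -/
private lemma phi_fwd (u : ℂ) (hu : ‖u‖ < 1) :
    (‖(1 + u/2)^2‖ + 3/4)^2 <
      2 * (‖(1 + u/2)^2‖ + ((1 + u/2)^2).re) := by
  have hns : Complex.normSq u < 1 := by
    have := Complex.sq_norm u
    nlinarith [norm_nonneg u]
  rw [Complex.normSq_apply] at hns
  set x := u.re with hx; set y := u.im with hy
  have habs : ‖(1 + u/2)^2‖ = (1 + x/2)^2 + (y/2)^2 := by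
    rw [norm_pow, Complex.sq_norm, Complex.normSq_apply]
    simp [hx, hy]; ring
  have hre : ((1 + u/2)^2).re = (1 + x/2)^2 - (y/2)^2 := by
    rw [sq, Complex.mul_re]; simp [hx, hy]; ring
  rw [habs, hre]
  have hx1 : -1 < x := by nlinarith [sq_nonneg y]
  nlinarith [sq_nonneg y, sq_nonneg x, sq_nonneg (x + y), sq_nonneg (x - y)]

set_option maxHeartbeats 1000000 in
private lemma phi_bwd (w : ℂ)
    (hw : (‖w‖ + 3/4)^2 < 2 * (‖w‖ + w.re)) :
    ∃ u : ℂ, ‖u‖ < 1 ∧ (1 + u/2)^2 = w := by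
  set m := ‖w‖ with hm
  set x := w.re with hx; set y := w.im with hy
  have hm0 : 0 ≤ m := norm_nonneg w
  have hm2 : m^2 = x^2 + y^2 := by
    rw [hm, Complex.sq_norm, Complex.normSq_apply, hx, hy]; ring
  have hmx : 0 < m + x := by nlinarith
  set a := Real.sqrt ((m + x)/2) with hadef
  have ha2 : a^2 = (m + x)/2 := Real.sq_sqrt (by linarith)
  have ha : 0 < a := Real.sqrt_pos.2 (by linarith)
  set b := y / (2*a) with hbdef
  have hb2 : b^2 = (m - x)/2 := by
    rw [hbdef]
    rw [div_pow]
    have : (2*a)^2 = 2*(m+x) := by rw [mul_pow]; rw [ha2]; ring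
    rw [this]
    have hy2 : y^2 = (m - x) * (m + x) := by nlinarith
    rw [hy2]
    field_simp
  have h2ab : 2*a*b = y := by
    rw [hbdef]
    field_simp
  set z : ℂ := ⟨a, b⟩ with hzdef
  have hzre : z.re = a := rfl
  have hzim : z.im = b := rfl
  refine ⟨2*(z - 1), ?_, ?_⟩
  · have habs2 : ‖2*(z-1)‖^2 = 4*((a-1)^2 + b^2) := by
      rw [Complex.sq_norm, Complex.normSq_apply, Complex.mul_re, Complex.mul_im,
        Complex.sub_re, Complex.sub_im, hzre, hzim]
      norm_num
      ring
    have hlt : 4*((a-1)^2 + b^2) < 1 := by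
      have h8a : 8*a > 4*m + 3 := by
        have h64 : 64 * a^2 > (4*m+3)^2 := by rw [ha2]; nlinarith
        nlinarith
      nlinarith [ha2, hb2]
    nlinarith [norm_nonneg (2*(z-1)), habs2]
  · have h1 : (1 : ℂ) + 2*(z - 1)/2 = z := by ring
    rw [h1]
    apply Complex.ext
    · rw [sq, Complex.mul_re, hzre, hzim]
      linear_combination ha2 - hb2
    · rw [sq, Complex.mul_im, hzre, hzim]
      linear_combination h2ab

private lemma phi_star_set :
    StarConvex ℝ (1 : ℂ)
      {w : ℂ | (‖w‖ + 3/4)^2 < 2 * (‖w‖ + w.re)} := by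
  intro y hy a b ha hb hab
  simp only [Set.mem_setOf_eq] at hy ⊢
  rcases eq_or_lt_of_le ha with ha0 | ha0
  · -- a = 0, b = 1
    have hb1 : b = 1 := by linarith
    rw [← ha0, hb1]
    simpa using hy
  set m := ‖y‖ with hm
  set x := y.re with hx
  have hm0 : 0 ≤ m := norm_nonneg y
  have hxm : x ≤ m := Complex.re_le_norm y
  have hx14 : 1/4 < x := by nlinarith [sq_nonneg (m - 1/4)]
  set p := a • (1 : ℂ) + b • y with hp
  set t := ‖p‖ with ht
  have hpre : p.re = a + b * x := by
    simp [hp, Complex.smul_re, hx]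
  have htub : t ≤ a + b * m := by
    calc t ≤ ‖a • (1:ℂ)‖ + ‖b • y‖ := norm_add_le _ _
    _ = a + b * m := by
        rw [Complex.real_smul, Complex.real_smul, norm_mul, norm_mul]
        simp [Complex.norm_real, _root_.abs_of_nonneg ha, _root_.abs_of_nonneg hb, hm]
  have htlb : a + b * x ≤ t := by rw [← hpre]; exact Complex.re_le_norm p
  have ht14 : 1/4 < t := by nlinarith
  rw [hpre]
  -- goal : (t + 3/4)^2 < 2 * (t + (a + b * x))
  have h1 : 0 ≤ (a + b*m - t) * (a + b*m + t - 1/2) :=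
    mul_nonneg (by linarith) (by linarith)
  have h2 : 0 ≤ b * (2*(m+x) - (m+3/4)^2) :=
    mul_nonneg hb (by linarith)
  have h3 : 0 ≤ (a*b) * (m-1)^2 := mul_nonneg (mul_nonneg ha hb) (sq_nonneg _)
  have h4 : 0 < a * a := mul_pos ha0 ha0
  have h5 : 0 ≤ a * b := mul_nonneg ha hb
  nlinarith [h1, h2, h3, h4, h5]

/-- For every nonzero `z` in the open unit disk,
`Re (z·φ'(z)/(φ(z) − 1)) = Re ((1 + z/2)/(1 + z/4)) > 0`, where `φ(z) = (1 + z/2)²`;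
consequently `φ` maps the unit disk onto a domain starlike with respect to
`φ(0) = 1`. -/
theorem phi_starlike_wrt_one :
    (∀ z ∈ Metric.ball (0 : ℂ) 1, z ≠ 0 →
      (z * (1 + z / 2) / ((1 + z / 2) ^ 2 - 1)).re = ((1 + z / 2) / (1 + z / 4)).re ∧
      0 < ((1 + z / 2) / (1 + z / 4)).re) ∧
    StarConvex ℝ (1 : ℂ) ((fun z : ℂ => (1 + z / 2) ^ 2) '' Metric.ball (0 : ℂ) 1) := by
  constructor
  · intro z hz hz0
    have habs : ‖z‖ < 1 := by
      rwa [Metric.mem_ball, dist_zero_right] at hz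
    have key : (1 + z/2)^2 - 1 = z * (1 + z/4) := by ring
    constructor
    · rw [key, mul_div_mul_left _ _ hz0]
    · exact phi_aux_pos z habs
  · have himg : (fun z : ℂ => (1 + z / 2) ^ 2) '' Metric.ball (0 : ℂ) 1 =
        {w : ℂ | (‖w‖ + 3/4)^2 < 2 * (‖w‖ + w.re)} := by
      ext w
      simp only [Set.mem_image, Metric.mem_ball, dist_zero_right,
        Set.mem_setOf_eq]
      constructor
      · rintro ⟨u, hu, rfl⟩
        exact phi_fwd u hu
      · intro h
        obtain ⟨u, hu, h2⟩ := phi_bwd w h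
        exact ⟨u, hu, h2⟩
    rw [himg]
    exact phi_star_set
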